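/- Let $k$ be a perfect field of characteristic $p > 0$, let $K = k((t))$ with valuation $v$, and let $f \in K^{\times}$, $r \geq 1$. Write $g = u/t^r$ with $u \in k[[t]]^{\times}$, and suppose that both $g \, df/f$ and $g \, dt/t$ extend to regular differentials, i.e. $g \frac{f'}{f} \in k[[t]]$ where $f'$ is the $t$-derivative of $f$. If $f \in k[[t]]^{\times}$ is a unit, then there exist $v \in k[[t]]^{\times}$ and $w \in 1 + t^{r+1} k[[t]]$ such that $f = v^p \cdot w$. -/

import Mathlib

open PowerSeries

private lemma charP_PS (k : Type*) (p : ℕ) [Field k] [CharP k p] :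
    CharP (PowerSeries k) p :=
  charP_of_injective_ringHom (f := (C : k →+* PowerSeries k)) PowerSeries.C_injective p

/-- In characteristic `p`, the logarithmic derivative of `f = v^p * w` equals that of `w`. -/
private lemma logderiv_eq (k : Type*) [Field k] (p : ℕ) [Fact p.Prime] [CharP k p]
    (v w f : (PowerSeries k)ˣ) (h : f = v ^ p * w) :
    (f : PowerSeries k).derivativeFun * ((f⁻¹ : (PowerSeries k)ˣ) : PowerSeries k)
      = (w : PowerSeries k).derivativeFun * ((w⁻¹ : (PowerSeries k)ˣ) : PowerSeries k) := by
  haveI := charP_PS k p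
  have hvp : ((v : PowerSeries k) ^ p).derivativeFun = 0 := by
    have h1 := (PowerSeries.derivative k).leibniz_pow (v : PowerSeries k) p
    have h2 : (PowerSeries.derivative k) ((v : PowerSeries k) ^ p)
        = ((v : PowerSeries k) ^ p).derivativeFun := rfl
    rw [h2] at h1
    rw [h1, ← Nat.cast_smul_eq_nsmul (PowerSeries k), CharP.cast_eq_zero (PowerSeries k) p, zero_smul]
  have hfc : (f : PowerSeries k) = (v : PowerSeries k) ^ p * (w : PowerSeries k) := by
    rw [h, Units.val_mul, Units.val_pow_eq_pow_val]
  have hfd : (f : PowerSeries k).derivativeFun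
      = (v : PowerSeries k) ^ p * (w : PowerSeries k).derivativeFun := by
    rw [hfc, derivativeFun_mul, hvp, smul_zero, add_zero, smul_eq_mul]
  have hfi : ((f⁻¹ : (PowerSeries k)ˣ) : PowerSeries k)
      = ((v⁻¹ : (PowerSeries k)ˣ) : PowerSeries k) ^ p
        * ((w⁻¹ : (PowerSeries k)ˣ) : PowerSeries k) := by
    rw [h, mul_inv, ← inv_pow, Units.val_mul, Units.val_pow_eq_pow_val]
  have hvv : (v : PowerSeries k) ^ p * ((v⁻¹ : (PowerSeries k)ˣ) : PowerSeries k) ^ p = 1 := by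
    rw [← mul_pow, Units.mul_inv, one_pow]
  calc (f : PowerSeries k).derivativeFun * ((f⁻¹ : (PowerSeries k)ˣ) : PowerSeries k)
      = ((v : PowerSeries k) ^ p * ((v⁻¹ : (PowerSeries k)ˣ) : PowerSeries k) ^ p)
        * ((w : PowerSeries k).derivativeFun * ((w⁻¹ : (PowerSeries k)ˣ) : PowerSeries k)) := by
        rw [hfd, hfi]; ring
    _ = (w : PowerSeries k).derivativeFun * ((w⁻¹ : (PowerSeries k)ˣ) : PowerSeries k) := by
        rw [hvv, one_mul]

/-- Let `k` be perfect of characteristic `p > 0`, `K = k((t))`, `r ≥ 1` and let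
`g = u/tʳ` with `u ∈ k[[t]]ˣ`. If `f ∈ k[[t]]ˣ` is a unit such that `g·f'/f` is a regular
power series (equivalently `tʳ ∣ u · f' · f⁻¹` in `k[[t]]`), then `f = vᵖ · w` for some
`v ∈ k[[t]]ˣ` and `w ∈ 1 + t^{r+1} k[[t]]`. -/
theorem stmt_3 (k : Type*) [Field k] [PerfectField k] (p : ℕ) [Fact p.Prime] [CharP k p]
    (r : ℕ) (hr : 1 ≤ r) (u : (PowerSeries k)ˣ) (f : (PowerSeries k)ˣ)
    (hreg : (X : PowerSeries k) ^ r ∣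
      (u : PowerSeries k) * (f : PowerSeries k).derivativeFun * ((f⁻¹ : (PowerSeries k)ˣ) : PowerSeries k)) :
    ∃ (v : (PowerSeries k)ˣ) (w : PowerSeries k),
      (X : PowerSeries k) ^ (r + 1) ∣ w - 1 ∧
      (f : PowerSeries k) = (v : PowerSeries k) ^ p * w := by
  haveI := charP_PS k p
  have hp0 : p ≠ 0 := (Fact.out (p := p.Prime)).ne_zero
  -- remove the unit `u` from the regularity hypothesis
  have hdvd : (X : PowerSeries k) ^ r ∣
      (f : PowerSeries k).derivativeFun * ((f⁻¹ : (PowerSeries k)ˣ) : PowerSeries k) := by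
    have h2 := hreg.mul_left ((u⁻¹ : (PowerSeries k)ˣ) : PowerSeries k)
    have h3 : ((u⁻¹ : (PowerSeries k)ˣ) : PowerSeries k)
        * ((u : PowerSeries k) * (f : PowerSeries k).derivativeFun
          * ((f⁻¹ : (PowerSeries k)ˣ) : PowerSeries k))
        = (f : PowerSeries k).derivativeFun * ((f⁻¹ : (PowerSeries k)ˣ) : PowerSeries k) := by
      have : ((u⁻¹ : (PowerSeries k)ˣ) : PowerSeries k) * (u : PowerSeries k) = 1 :=
        Units.inv_mul u
      calc ((u⁻¹ : (PowerSeries k)ˣ) : PowerSeries k)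
          * ((u : PowerSeries k) * (f : PowerSeries k).derivativeFun
            * ((f⁻¹ : (PowerSeries k)ˣ) : PowerSeries k))
          = (((u⁻¹ : (PowerSeries k)ˣ) : PowerSeries k) * (u : PowerSeries k))
            * ((f : PowerSeries k).derivativeFun
              * ((f⁻¹ : (PowerSeries k)ˣ) : PowerSeries k)) := by ring
        _ = _ := by rw [this, one_mul]
    rwa [h3] at h2
  -- main induction
  have key : ∀ n : ℕ, n ≤ r → ∃ v w : (PowerSeries k)ˣ,
      (X : PowerSeries k) ^ (n + 1) ∣ (w : PowerSeries k) - 1 ∧ f = v ^ p * w := by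
    intro n
    induction n with
    | zero =>
      intro _
      set cc : (PowerSeries k)ˣ →* kˣ := Units.map (constantCoeff).toMonoidHom with hcc
      obtain ⟨b, hb⟩ := surjective_frobenius k p ((cc f : k))
      rw [frobenius_def] at hb
      have hb0 : b ≠ 0 := by
        rintro rfl
        exact (cc f).ne_zero (by rw [← hb, zero_pow hp0])
      set v0 : (PowerSeries k)ˣ := Units.map (C : k →+* PowerSeries k).toMonoidHom (Units.mk0 b hb0) with hv0
      refine ⟨v0, v0⁻¹ ^ p * f, ?_, by group⟩
      have hccv : cc v0 = Units.mk0 b hb0 := by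
        ext
        simp [hcc, hv0, Units.coe_map]
      have hccf : cc v0 ^ p = cc f := by
        ext
        rw [← hb, hccv]
        simp [Units.val_pow_eq_pow_val]
      have hccw : cc (v0⁻¹ ^ p * f) = 1 := by
        rw [map_mul, map_pow, map_inv, inv_pow, hccf, inv_mul_cancel]
      have hconst : constantCoeff ((v0⁻¹ ^ p * f : (PowerSeries k)ˣ) : PowerSeries k) = 1 := by
        have := congrArg (Units.val) hccw
        simpa [hcc, Units.coe_map] using this
      rw [zero_add, pow_one, X_dvd_iff, map_sub, map_one, hconst, sub_self]
    | succ n ih =>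
      intro hn
      obtain ⟨v, w, hw, hf⟩ := ih (Nat.le_of_succ_le hn)
      set s : PowerSeries k := (w : PowerSeries k) - 1 with hs
      have hws : (w : PowerSeries k) = 1 + s := by rw [hs]; ring
      have hds : (w : PowerSeries k).derivativeFun = s.derivativeFun := by
        rw [hws, derivativeFun_add, derivativeFun_one, zero_add]
      have hinv : ((w⁻¹ : (PowerSeries k)ˣ) : PowerSeries k)
          = 1 - s * ((w⁻¹ : (PowerSeries k)ˣ) : PowerSeries k) := by
        have h1 : (1 + s) * ((w⁻¹ : (PowerSeries k)ˣ) : PowerSeries k) = 1 := by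
          rw [← hws]; exact Units.mul_inv w
        linear_combination h1
      have hcoeff : coeff n ((f : PowerSeries k).derivativeFun
          * ((f⁻¹ : (PowerSeries k)ˣ) : PowerSeries k)) = 0 :=
        X_pow_dvd_iff.mp hdvd n (lt_of_lt_of_le (Nat.lt_succ_self n) hn)
      rw [logderiv_eq k p v w f hf] at hcoeff
      have h2 : coeff n (s.derivativeFun
          * (s * ((w⁻¹ : (PowerSeries k)ˣ) : PowerSeries k))) = 0 := by
        have hd : (X : PowerSeries k) ^ (n + 1) ∣ s.derivativeFun
            * (s * ((w⁻¹ : (PowerSeries k)ˣ) : PowerSeries k)) :=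
          ((hw.mul_right _).mul_left _)
        exact X_pow_dvd_iff.mp hd n (Nat.lt_succ_self n)
      have ha : coeff (n + 1) s * ((n : k) + 1) = 0 := by
        have h3 : coeff n ((w : PowerSeries k).derivativeFun
            * ((w⁻¹ : (PowerSeries k)ˣ) : PowerSeries k))
            = coeff n s.derivativeFun - coeff n (s.derivativeFun
              * (s * ((w⁻¹ : (PowerSeries k)ˣ) : PowerSeries k))) := by
          rw [hds]
          conv_lhs => rw [hinv]
          rw [mul_sub, mul_one, map_sub]
        rw [h3, h2, sub_zero, show coeff n s.derivativeFun = coeff (n + 1) s * ((n : k) + 1) from coeff_derivative s n] at hcoeff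
        push_cast at hcoeff ⊢
        exact hcoeff
      by_cases hpdvd : p ∣ n + 1
      · -- p divides n+1 : absorb the coefficient into a p-th power
        obtain ⟨m, hm⟩ := hpdvd
        have hm0 : m ≠ 0 := by
          rintro rfl
          omega
        obtain ⟨b, hb⟩ := surjective_frobenius k p (coeff (n + 1) s)
        rw [frobenius_def] at hb
        set z : PowerSeries k := 1 + C b * X ^ m with hz
        have hzp : z ^ p = 1 + C (coeff (n + 1) s) * X ^ (n + 1) := by
          rw [hz, add_pow_char, one_pow, mul_pow, ← map_pow, hb, ← pow_mul,
            mul_comm m p, ← hm]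
        have hzc : constantCoeff z = 1 := by
          simp [hz, map_pow, constantCoeff_X, zero_pow hm0]
        have hzu : IsUnit z := isUnit_iff_constantCoeff.mpr (by rw [hzc]; exact isUnit_one)
        obtain ⟨zu, hzuv⟩ := hzu
        refine ⟨v * zu, (zu ^ p)⁻¹ * w, ?_, ?_⟩
        · have hd2 : (X : PowerSeries k) ^ (n + 1 + 1) ∣
              ((w : PowerSeries k) - ((zu ^ p : (PowerSeries k)ˣ) : PowerSeries k)) := by
            rw [X_pow_dvd_iff]
            intro j hj
            have hval : ((zu ^ p : (PowerSeries k)ˣ) : PowerSeries k)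
                = 1 + C (coeff (n + 1) s) * X ^ (n + 1) := by
              rw [Units.val_pow_eq_pow_val, hzuv, hzp]
            have hrw : (w : PowerSeries k) - ((zu ^ p : (PowerSeries k)ˣ) : PowerSeries k)
                = s - C (coeff (n + 1) s) * X ^ (n + 1) := by
              rw [hval, hs]; ring
            rw [hrw, map_sub, coeff_C_mul, coeff_X_pow]
            rcases Nat.lt_succ_iff_lt_or_eq.mp hj with hj' | hj'
            · rw [X_pow_dvd_iff.mp hw j hj', if_neg (Nat.ne_of_lt hj'), mul_zero, sub_self]
            · rw [hj', if_pos rfl, mul_one, sub_self]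
          have hrw2 : (((zu ^ p)⁻¹ * w : (PowerSeries k)ˣ) : PowerSeries k) - 1
              = (((zu ^ p)⁻¹ : (PowerSeries k)ˣ) : PowerSeries k)
                * ((w : PowerSeries k) - ((zu ^ p : (PowerSeries k)ˣ) : PowerSeries k)) := by
            rw [Units.val_mul, mul_sub, Units.inv_mul]
          rw [hrw2]
          exact hd2.mul_left _
        · rw [hf, mul_pow, mul_assoc, ← mul_assoc ((zu : (PowerSeries k)ˣ) ^ p), mul_inv_cancel, one_mul]
      · -- p does not divide n+1 : the coefficient must vanish
        have hne : ((n : k) + 1) ≠ 0 := by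
          have : ((n + 1 : ℕ) : k) ≠ 0 := by
            rw [Ne, CharP.cast_eq_zero_iff k p]
            exact hpdvd
          push_cast at this
          exact this
        have ha0 : coeff (n + 1) s = 0 := by
          rcases mul_eq_zero.mp ha with h | h
          · exact h
          · exact absurd h hne
        refine ⟨v, w, ?_, hf⟩
        rw [X_pow_dvd_iff]
        intro j hj
        rcases Nat.lt_succ_iff_lt_or_eq.mp hj with hj' | hj'
        · exact X_pow_dvd_iff.mp hw j hj'
        · rw [hj', ← hs] at *
          exact ha0
  obtain ⟨v, w, hw, hf⟩ := key r le_rfl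
  exact ⟨v, (w : PowerSeries k), hw, by rw [hf, Units.val_mul, Units.val_pow_eq_pow_val]⟩
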